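/- Let X be a compact metric space, t₀ ∈ X, (μ_j)_{j∈ℕ} a countable family of Borel probability measures on X, and δ > 0. Then there exists a finite partition of X into Borel sets such that: (i) every atom of the partition has diameter at most δ; (ii) t₀ belongs to the topological interior of the atom containing it; and (iii) the topological boundary of every atom has μ_j-measure zero for every j. -/
import Mathlib

open MeasureTheory Set Metric

lemma aux_frontier_diff {X : Type*} [TopologicalSpace X] (s t : Set X) :
    frontier (s \ t) ⊆ frontier s ∪ frontier t := by
  rw [diff_eq]
  refine (frontier_inter_subset s tᶜ).trans ?_
  rw [frontier_compl]
  exact union_subset_union inter_subset_left inter_subset_right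

lemma aux_frontier_iUnion {X : Type*} [TopologicalSpace X] {ι : Type*} [Finite ι]
    (B : ι → Set X) (hB : ∀ i, IsOpen (B i)) :
    frontier (⋃ i, B i) ⊆ ⋃ i, frontier (B i) := by
  have hU : IsOpen (⋃ i, B i) := isOpen_iUnion hB
  rw [hU.frontier_eq]
  intro x hx
  obtain ⟨hx1, hx2⟩ := hx
  have : x ∈ ⋃ i, closure (B i) := by
    have hcl : IsClosed (⋃ i, closure (B i)) := isClosed_iUnion_of_finite fun i => isClosed_closure
    exact hcl.closure_subset_iff.mpr (iUnion_mono fun i => subset_closure) hx1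
  obtain ⟨i, hi⟩ := mem_iUnion.mp this
  exact mem_iUnion.mpr ⟨i, hi, fun h => hx2 (mem_iUnion.mpr ⟨i, interior_subset h⟩)⟩

lemma aux_good_radius {X : Type*} [MetricSpace X] [MeasurableSpace X] [BorelSpace X]
    (μs : ℕ → Measure X) [∀ j, IsProbabilityMeasure (μs j)] (x : X) {a b : ℝ} (hab : a < b) :
    ∃ r ∈ Ioo a b, ∀ j, μs j (sphere x r) = 0 := by
  have hbad : ∀ j, Set.Countable {r : ℝ | 0 < μs j (sphere x r)} := by
    intro j
    apply Measure.countable_meas_pos_of_disjoint_iUnion (μ := μs j)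
      (As := fun r : ℝ => sphere x r)
    · exact fun r => (isClosed_sphere).measurableSet
    · intro r s hrs
      refine Set.disjoint_left.mpr fun y hy hy' => hrs ?_
      simp only [mem_sphere_iff_norm, Metric.mem_sphere] at hy hy'
      rw [← hy, ← hy']
  have hcount : Set.Countable (⋃ j, {r : ℝ | 0 < μs j (sphere x r)}) :=
    countable_iUnion hbad
  have hvol : volume (Ioo a b \ ⋃ j, {r : ℝ | 0 < μs j (sphere x r)}) ≠ 0 := by
    rw [measure_diff_null (hcount.measure_zero _)]
    simp [Real.volume_Ioo, hab, sub_pos.mpr hab]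
  obtain ⟨r, hr1, hr2⟩ := nonempty_of_measure_ne_zero hvol
  refine ⟨r, hr1, fun j => ?_⟩
  by_contra h
  exact hr2 (mem_iUnion.mpr ⟨j, pos_iff_ne_zero.mpr h⟩)

/-- In a compact metric space, given a point `t₀`, a countable family of
Borel probability measures and `δ > 0`, there is a finite Borel partition whose atoms
have diameter at most `δ`, such that `t₀` lies in the interior of the atom containing
it and the boundary of every atom is null for every measure in the family. -/
theorem exists_finite_partition_small_diam_null_boundary
    {X : Type*} [MetricSpace X] [CompactSpace X] [MeasurableSpace X] [BorelSpace X]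
    (t₀ : X) (μs : ℕ → Measure X) [∀ j, IsProbabilityMeasure (μs j)]
    (δ : ℝ) (hδ : 0 < δ) :
    ∃ (n : ℕ) (A : Fin n → Set X),
      (∀ i, MeasurableSet (A i)) ∧
      (Pairwise fun i j => Disjoint (A i) (A j)) ∧
      (⋃ i, A i) = univ ∧
      (∀ i, Metric.diam (A i) ≤ δ) ∧
      (∀ i, t₀ ∈ A i → t₀ ∈ interior (A i)) ∧
      (∀ i, ∀ j : ℕ, μs j (frontier (A i)) = 0) := by
  -- choose good radii
  have hrad : ∀ x : X, ∃ r ∈ Ioo (δ/4) (δ/2), ∀ j, μs j (sphere x r) = 0 := fun x =>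
    aux_good_radius μs x (by linarith)
  choose r hr hrnull using hrad
  have hrpos : ∀ x, 0 < r x := fun x => lt_trans (by linarith) (hr x).1
  -- finite subcover
  have hcov : univ ⊆ ⋃ x : X, ball x (r x) := fun x _ =>
    mem_iUnion.mpr ⟨x, mem_ball_self (hrpos x)⟩
  obtain ⟨s, hs⟩ := isCompact_univ.elim_finite_subcover (fun x : X => ball x (r x))
    (fun x => isOpen_ball) hcov
  classical
  set l : List X := t₀ :: s.toList with hl
  set n := l.length with hn
  have hn0 : 0 < n := by simp [hn, hl]
  set c : Fin n → X := fun i => l.get i with hc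
  set B : Fin n → Set X := fun i => ball (c i) (r (c i)) with hB
  have hc0 : c ⟨0, hn0⟩ = t₀ := rfl
  -- the disjointified pieces
  set A : Fin n → Set X := fun k => B k \ ⋃ i, ⋃ (_ : i < k), B i with hA
  have hAsub : ∀ k, A k ⊆ B k := fun k => diff_subset
  have hAdisj : ∀ i k : Fin n, i < k → Disjoint (A i) (A k) := by
    intro i k hik
    refine Set.disjoint_left.mpr fun x hxi hxk => ?_
    exact hxk.2 (mem_iUnion.mpr ⟨i, mem_iUnion.mpr ⟨hik, hAsub i hxi⟩⟩)
  refine ⟨n, A, ?_, ?_, ?_, ?_, ?_, ?_⟩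
  · intro k
    exact (isOpen_ball.measurableSet).diff
      (MeasurableSet.iUnion fun i => MeasurableSet.iUnion fun _ => isOpen_ball.measurableSet)
  · intro i k hik
    rcases lt_or_gt_of_ne hik with h | h
    · exact hAdisj i k h
    · exact (hAdisj k i h).symm
  · refine eq_univ_of_forall fun x => ?_
    have hx : ∃ k : Fin n, x ∈ B k := by
      rcases mem_iUnion₂.mp (hs (mem_univ x)) with ⟨y, hy, hxy⟩
      have : y ∈ l := List.mem_cons_of_mem _ (Finset.mem_toList.mpr hy)
      obtain ⟨k, hk⟩ := List.mem_iff_get.mp this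
      refine ⟨k, ?_⟩
      simp only [hB, hc]
      rw [show l.get k = y from hk]
      exact hxy
    obtain ⟨k, hk, hmin⟩ := Finset.exists_min_image (Finset.univ.filter fun k => x ∈ B k)
      id ⟨hx.choose, by simp [hx.choose_spec]⟩
    simp only [Finset.mem_filter, Finset.mem_univ, true_and] at hk hmin
    refine mem_iUnion.mpr ⟨k, hk, fun hmem => ?_⟩
    obtain ⟨i, hi⟩ := mem_iUnion.mp hmem
    obtain ⟨hik, hxi⟩ := mem_iUnion.mp hi
    exact absurd (hmin i (by simpa using hxi)) (not_le.mpr hik)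
  · intro k
    refine (Metric.diam_mono (hAsub k) isBounded_ball).trans ?_
    refine (diam_ball (le_of_lt (hrpos _))).trans ?_
    have := (hr (c k)).2
    linarith
  · intro i hi
    have hi0 : i = ⟨0, hn0⟩ := by
      by_contra h
      have : (⟨0, hn0⟩ : Fin n) < i := by
        rcases Fin.lt_or_lt_of_ne h with h' | h'
        · exact absurd h' (by simp [Fin.lt_def])
        · exact h'
      have ht0 : t₀ ∈ B ⟨0, hn0⟩ := by
        simp only [hB, hc0]
        exact mem_ball_self (hrpos t₀)
      exact hi.2 (mem_iUnion.mpr ⟨⟨0, hn0⟩, mem_iUnion.mpr ⟨this, ht0⟩⟩)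
    subst hi0
    have hA0 : A ⟨0, hn0⟩ = B ⟨0, hn0⟩ := by
      rw [hA, sdiff_eq_self_iff_disjoint]
      refine Set.disjoint_left.mpr fun x hx _ => ?_
      obtain ⟨j, hj⟩ := mem_iUnion.mp hx
      obtain ⟨hjlt, -⟩ := mem_iUnion.mp hj
      exact absurd hjlt (by simp [Fin.lt_def])
    rw [hA0] at hi ⊢
    rwa [isOpen_ball.interior_eq]
  · intro k j
    have hsub : frontier (A k) ⊆ ⋃ i : Fin n, sphere (c i) (r (c i)) := by
      refine (aux_frontier_diff _ _).trans ?_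
      refine union_subset ?_ ?_
      · exact (frontier_ball_subset_sphere).trans (subset_iUnion (fun i : Fin n => sphere (c i) (r (c i))) k)
      · refine (aux_frontier_iUnion _ fun i => isOpen_iUnion fun _ => isOpen_ball).trans ?_
        refine iUnion_subset fun i => ?_
        by_cases h : i < k
        · rw [iUnion_eq_if, if_pos h]
          exact (frontier_ball_subset_sphere).trans
            (subset_iUnion (fun i : Fin n => sphere (c i) (r (c i))) i)
        · rw [iUnion_eq_if, if_neg h]
          simp
    refine measure_mono_null hsub ?_
    exact measure_iUnion_null fun i => hrnull (c i) j
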